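/- Let t ∈ ℂ and consider the field ℂ(y₁, y₂) of rational functions with the symmetric group action s swapping y₁ and y₂. Define the Lusztig operator T f = t·f + [(1 - t·y₁/y₂)/(1 - y₁/y₂)]·(s(f) - f). Then for the functions φ₁ = 1/(1 - t·y₁⁻¹/x) and φ₂ = (1 - y₁⁻¹/x)/((1 - t·y₂⁻¹/x)(1 - t·y₁⁻¹/x)) (regarded as elements of ℂ(x, y₁, y₂) with s acting only on y₁, y₂): T φ₁ = t·φ₂ and T φ₂ = (t - 1)·φ₂ + φ₁. -/

import Mathlib

private lemma ddd_aux {K : Type*} [Field K] (A B C D : K) :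
    (A / B) / (C / D) = A * D / (B * C) := by
  simp [division_def, mul_inv]; ring

set_option maxHeartbeats 2000000

/-- Proposition 6.1 in the simplest instance: the Lusztig operator
`T f = t·f + ((1 - t·y₁/y₂)/(1 - y₁/y₂))·(s(f) - f)`, where `s` swaps `y₁`
and `y₂` (fixing `x` and `t`), satisfies `T φ₁ = t·φ₂` and
`T φ₂ = (t-1)·φ₂ + φ₁` for
`φ₁ = 1/(1 - t·y₁⁻¹/x)` and
`φ₂ = (1 - y₁⁻¹/x)/((1 - t·y₂⁻¹/x)(1 - t·y₁⁻¹/x))`. -/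
theorem stmt_14 {K : Type*} [Field K] (s : K →+* K)
    (t x y₁ y₂ : K)
    (hst : s t = t) (hsx : s x = x) (hs1 : s y₁ = y₂) (hs2 : s y₂ = y₁)
    (hx : x ≠ 0) (hy₁ : y₁ ≠ 0) (hy₂ : y₂ ≠ 0) (hne : y₁ / y₂ ≠ 1)
    (h1 : 1 - t * y₁⁻¹ / x ≠ 0) (h2 : 1 - t * y₂⁻¹ / x ≠ 0)
    (T : K → K)
    (hT : ∀ f : K,
      T f = t * f + ((1 - t * (y₁ / y₂)) / (1 - y₁ / y₂)) * (s f - f)) :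
    T (1 / (1 - t * y₁⁻¹ / x)) =
        t * ((1 - y₁⁻¹ / x) / ((1 - t * y₂⁻¹ / x) * (1 - t * y₁⁻¹ / x))) ∧
    T ((1 - y₁⁻¹ / x) / ((1 - t * y₂⁻¹ / x) * (1 - t * y₁⁻¹ / x))) =
        (t - 1) * ((1 - y₁⁻¹ / x) / ((1 - t * y₂⁻¹ / x) * (1 - t * y₁⁻¹ / x)))
          + 1 / (1 - t * y₁⁻¹ / x) := by
  have hden : 1 - y₁ / y₂ ≠ 0 := sub_ne_zero.mpr (Ne.symm hne)
  have e1 : 1 - t * y₁⁻¹ / x = (y₁ * x - t) / (y₁ * x) := by field_simp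
  have e2 : 1 - t * y₂⁻¹ / x = (y₂ * x - t) / (y₂ * x) := by field_simp
  have h1' : y₁ * x - t ≠ 0 := by
    intro h; exact h1 (by rw [e1, h, zero_div])
  have h2' : y₂ * x - t ≠ 0 := by
    intro h; exact h2 (by rw [e2, h, zero_div])
  have hne' : y₂ - y₁ ≠ 0 := by
    intro h
    exact hne (by rw [sub_eq_zero] at h; rw [← h]; exact div_self hy₂)
  have e3 : 1 - y₁⁻¹ / x = (y₁ * x - 1) / (y₁ * x) := by field_simp
  have e4 : 1 - y₂⁻¹ / x = (y₂ * x - 1) / (y₂ * x) := by field_simp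
  have e5 : 1 - y₁ / y₂ = (y₂ - y₁) / y₂ := by field_simp
  have e6 : 1 - t * (y₁ / y₂) = (y₂ - t * y₁) / y₂ := by
    rw [mul_div_assoc', sub_div' hy₂, one_mul]
  have hba : (y₂ * x - t) * (y₁ * x - t) ≠ 0 := mul_ne_zero h2' h1'
  have hcba : (y₂ - y₁) * ((y₂ * x - t) * (y₁ * x - t)) ≠ 0 := mul_ne_zero hne' hba
  have r1 : (y₁ * x - 1) * (y₂ * x * (y₁ * x)) / (y₁ * x * ((y₂ * x - t) * (y₁ * x - t)))
      = (y₁ * x - 1) * (y₂ * x) / ((y₂ * x - t) * (y₁ * x - t)) := by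
    rw [mul_comm (y₂ * x) (y₁ * x), mul_comm (y₁ * x - 1) (y₁ * x * (y₂ * x)), mul_assoc,
      mul_div_mul_left _ _ (mul_ne_zero hy₁ hx), mul_comm (y₂ * x) (y₁ * x - 1)]
  have r2 : (y₂ * x - 1) * (y₁ * x * (y₂ * x)) / (y₂ * x * ((y₁ * x - t) * (y₂ * x - t)))
      = (y₂ * x - 1) * (y₁ * x) / ((y₁ * x - t) * (y₂ * x - t)) := by
    rw [mul_comm (y₁ * x) (y₂ * x), mul_comm (y₂ * x - 1) (y₂ * x * (y₁ * x)), mul_assoc,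
      mul_div_mul_left _ _ (mul_ne_zero hy₂ hx), mul_comm (y₁ * x) (y₂ * x - 1)]
  have r3 : (y₂ - t * y₁) * y₂ / (y₂ * (y₂ - y₁)) = (y₂ - t * y₁) / (y₂ - y₁) := by
    rw [mul_comm (y₂ - t * y₁) y₂, mul_div_mul_left _ _ hy₂]
  constructor
  · rw [hT]
    simp only [map_div₀, map_sub, map_one, map_mul, map_inv₀, hst, hsx, hs1, hs2]
    simp only [e1, e2, e3, e4, e5, e6, ddd_aux, one_div_div, div_mul_div_comm]
    rw [r1, r3, div_sub_div _ _ h2' h1', div_mul_div_comm, ← mul_div_assoc, ← mul_div_assoc,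
      div_add_div _ _ h1' hcba, div_eq_div_iff (mul_ne_zero h1' hcba) hba]
    ring
  · rw [hT]
    simp only [map_div₀, map_sub, map_one, map_mul, map_inv₀, hst, hsx, hs1, hs2]
    simp only [e1, e2, e3, e4, e5, e6, ddd_aux, one_div_div, div_mul_div_comm]
    rw [r1, r2, r3, mul_comm (y₁ * x - t) (y₂ * x - t), ← sub_div]
    simp only [← mul_div_assoc, div_mul_eq_mul_div, div_div]
    rw [div_add_div _ _ hba hcba, div_add_div _ _ hba h1',
      div_eq_div_iff (mul_ne_zero hba hcba) (mul_ne_zero hba h1')]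
    ring
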